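/- For n ≥ 4 and m ≥ 2, the metric dimension of (Kₙ × Pₘ) ⊙ K₁ equals n − 1. -/

import Mathlib

open SimpleGraph

/-- Corona `G ⊙ K₁`: attach to each vertex `v` (as `Sum.inl v`) a pendant vertex `Sum.inr v`. -/
def corona {V : Type*} (G : SimpleGraph V) : SimpleGraph (V ⊕ V) :=
  SimpleGraph.fromRel (fun a b =>
    match a, b with
    | Sum.inl x, Sum.inl y => G.Adj x y
    | Sum.inl x, Sum.inr y => x = y
    | _, _ => False)

/-- `S` is a resolving set for `G`: distinct vertices have distinct distance vectors to `S`. -/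
def IsResolving {V : Type*} (G : SimpleGraph V) (S : Set V) : Prop :=
  ∀ u v : V, (∀ s ∈ S, G.dist u s = G.dist v s) → u = v

/-- Metric dimension: minimum cardinality of a resolving set. -/
noncomputable def metricDim {V : Type*} [Fintype V] (G : SimpleGraph V) : ℕ :=
  sInf {k | ∃ S : Finset V, S.card = k ∧ IsResolving G (↑S : Set V)}

abbrev Vtx (n m : ℕ) := (Fin n × Fin m) ⊕ (Fin n × Fin m)

def HH (n m : ℕ) : SimpleGraph (Vtx n m) :=
  corona ((⊤ : SimpleGraph (Fin n)) □ pathGraph m)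

def DD {n m : ℕ} : Vtx n m → Vtx n m → ℕ
  | .inl (b,j), .inl (a,i) => Nat.dist j i + (if b = a then 0 else 1)
  | .inl (b,j), .inr (a,i) => 1 + Nat.dist j i + (if b = a then 0 else 1)
  | .inr (b,j), .inl (a,i) => 1 + Nat.dist j i + (if b = a then 0 else 1)
  | .inr (b,j), .inr (a,i) =>
      if b = a ∧ j = i then 0 else 2 + Nat.dist j i + (if b = a then 0 else 1)

lemma HH_adj_inl_inl {n m : ℕ} (x y : Fin n × Fin m) :
    (HH n m).Adj (.inl x) (.inl y) ↔
      (x.1 ≠ y.1 ∧ x.2 = y.2) ∨ (x.1 = y.1 ∧ ((x.2:ℕ) + 1 = y.2 ∨ (y.2:ℕ) + 1 = x.2)) := by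
  obtain ⟨b, j⟩ := x; obtain ⟨a, i⟩ := y
  simp only [HH, corona, fromRel_adj, boxProd_adj, top_adj, pathGraph_adj]
  simp only [ne_eq, Sum.inl.injEq, Prod.mk.injEq, Fin.ext_iff, not_and]
  omega

lemma HH_adj_inl_inr {n m : ℕ} (x y : Fin n × Fin m) :
    (HH n m).Adj (.inl x) (.inr y) ↔ x = y := by
  simp only [HH, corona, fromRel_adj]
  constructor
  · rintro ⟨-, h | h⟩
    · exact h
    · exact h.elim
  · rintro rfl
    exact ⟨by simp, Or.inl rfl⟩

lemma HH_adj_inr_inr {n m : ℕ} (x y : Fin n × Fin m) :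
    ¬ (HH n m).Adj (.inr x) (.inr y) := by
  simp only [HH, corona, fromRel_adj]
  rintro ⟨-, h | h⟩ <;> exact h

lemma DD_self {n m : ℕ} (u : Vtx n m) : DD u u = 0 := by
  rcases u with ⟨b, j⟩ | ⟨b, j⟩ <;> simp [DD, Nat.dist_self]

lemma DD_lipschitz {n m : ℕ} (u w v : Vtx n m) (h : (HH n m).Adj u w) :
    DD u v ≤ DD w v + 1 := by
  rcases u with ⟨b, j⟩ | ⟨b, j⟩ <;> rcases w with ⟨b', j'⟩ | ⟨b', j'⟩ <;>
    rcases v with ⟨a, i⟩ | ⟨a, i⟩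
  · rw [HH_adj_inl_inl] at h
    simp only [DD, Nat.dist, ne_eq, Fin.ext_iff] at *
    split_ifs at * <;> omega
  · rw [HH_adj_inl_inl] at h
    simp only [DD, Nat.dist, ne_eq, Fin.ext_iff, Prod.mk.injEq] at *
    split_ifs at * <;> omega
  · rw [HH_adj_inl_inr] at h
    rw [Prod.mk.injEq] at h
    obtain ⟨rfl, rfl⟩ := h
    simp only [DD, Nat.dist, ne_eq, Fin.ext_iff, Prod.mk.injEq] at *
    split_ifs at * <;> omega
  · rw [HH_adj_inl_inr] at h
    rw [Prod.mk.injEq] at h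
    obtain ⟨rfl, rfl⟩ := h
    simp only [DD, Nat.dist, ne_eq, Fin.ext_iff, Prod.mk.injEq] at *
    split_ifs at * <;> omega
  · have h' := ((HH n m).adj_symm h)
    rw [HH_adj_inl_inr] at h'
    rw [Prod.mk.injEq] at h'
    obtain ⟨rfl, rfl⟩ := h'
    simp only [DD, Nat.dist, ne_eq, Fin.ext_iff, Prod.mk.injEq] at *
    split_ifs at * <;> omega
  · have h' := ((HH n m).adj_symm h)
    rw [HH_adj_inl_inr] at h'
    rw [Prod.mk.injEq] at h'
    obtain ⟨rfl, rfl⟩ := h'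
    simp only [DD, Nat.dist, ne_eq, Fin.ext_iff, Prod.mk.injEq] at *
    split_ifs at * <;> omega
  · exact absurd h (HH_adj_inr_inr _ _)
  · exact absurd h (HH_adj_inr_inr _ _)

lemma DD_le_length {n m : ℕ} {u v : Vtx n m} (p : (HH n m).Walk u v) :
    DD u v ≤ p.length := by
  induction p with
  | nil => simp [DD_self]
  | cons h q ih =>
      calc DD _ _ ≤ DD _ _ + 1 := DD_lipschitz _ _ _ h
      _ ≤ q.length + 1 := by omega
      _ = _ := by simp [SimpleGraph.Walk.length_cons]

lemma exists_walk_row {n m : ℕ} (b : Fin n) :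
    ∀ (k : ℕ) (j i : Fin m), (j:ℕ) + k = (i:ℕ) →
      ∃ p : (HH n m).Walk (.inl (b,j)) (.inl (b,i)), p.length = k := by
  intro k
  induction k with
  | zero =>
      intro j i h
      have : j = i := Fin.ext (by omega)
      subst this
      exact ⟨SimpleGraph.Walk.nil, rfl⟩
  | succ k ih =>
      intro j i h
      have hj1 : (j:ℕ) + 1 < m := by have := i.isLt; omega
      have hadj : (HH n m).Adj (.inl (b,j)) (.inl (b, ⟨(j:ℕ)+1, hj1⟩)) := by
        rw [HH_adj_inl_inl]; right; exact ⟨rfl, Or.inl rfl⟩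
      obtain ⟨p, hp⟩ := ih ⟨(j:ℕ)+1, hj1⟩ i (by simp; omega)
      exact ⟨SimpleGraph.Walk.cons hadj p, by simp [hp]⟩

lemma exists_walk_inl_inl {n m : ℕ} (b a : Fin n) (j i : Fin m) :
    ∃ p : (HH n m).Walk (.inl (b,j)) (.inl (a,i)),
      p.length = Nat.dist j i + (if b = a then 0 else 1) := by
  have step1 : ∃ p : (HH n m).Walk (.inl (b,j)) (.inl (b,i)), p.length = Nat.dist j i := by
    rcases le_or_gt (j:ℕ) (i:ℕ) with h | h
    · obtain ⟨p, hp⟩ := exists_walk_row b ((i:ℕ) - (j:ℕ)) j i (by omega)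
      exact ⟨p, by rw [hp, Nat.dist]; omega⟩
    · obtain ⟨p, hp⟩ := exists_walk_row b ((j:ℕ) - (i:ℕ)) i j (by omega)
      exact ⟨p.reverse, by rw [SimpleGraph.Walk.length_reverse, hp, Nat.dist]; omega⟩
  obtain ⟨p, hp⟩ := step1
  by_cases hba : b = a
  · subst hba; exact ⟨p, by simp [hp]⟩
  · have hadj : (HH n m).Adj (.inl (b,i)) (.inl (a,i)) := by
      rw [HH_adj_inl_inl]; exact Or.inl ⟨hba, rfl⟩
    refine ⟨p.append (SimpleGraph.Walk.cons hadj SimpleGraph.Walk.nil), ?_⟩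
    simp [hp, hba]

lemma exists_walk_DD {n m : ℕ} (u v : Vtx n m) :
    ∃ p : (HH n m).Walk u v, p.length = DD u v := by
  rcases u with ⟨b, j⟩ | ⟨b, j⟩ <;> rcases v with ⟨a, i⟩ | ⟨a, i⟩
  · exact exists_walk_inl_inl b a j i
  · obtain ⟨p, hp⟩ := exists_walk_inl_inl b a j i
    have hadj : (HH n m).Adj (.inl (a,i)) (.inr (a,i)) := (HH_adj_inl_inr _ _).2 rfl
    refine ⟨p.append (SimpleGraph.Walk.cons hadj SimpleGraph.Walk.nil), ?_⟩
    simp [hp, DD]; omega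
  · obtain ⟨p, hp⟩ := exists_walk_inl_inl b a j i
    have hadj : (HH n m).Adj (.inr (b,j)) (.inl (b,j)) :=
      ((HH n m).adj_symm ((HH_adj_inl_inr _ _).2 rfl))
    refine ⟨SimpleGraph.Walk.cons hadj p, ?_⟩
    simp [hp, DD]; omega
  · by_cases heq : b = a ∧ j = i
    · obtain ⟨rfl, rfl⟩ := heq
      exact ⟨SimpleGraph.Walk.nil, by simp [DD]⟩
    · obtain ⟨p, hp⟩ := exists_walk_inl_inl b a j i
      have h1 : (HH n m).Adj (.inr (b,j)) (.inl (b,j)) :=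
        ((HH n m).adj_symm ((HH_adj_inl_inr _ _).2 rfl))
      have h2 : (HH n m).Adj (.inl (a,i)) (.inr (a,i)) := (HH_adj_inl_inr _ _).2 rfl
      refine ⟨SimpleGraph.Walk.cons h1 (p.append (SimpleGraph.Walk.cons h2 SimpleGraph.Walk.nil)), ?_⟩
      simp [hp, DD, heq]; omega

lemma dist_eq_DD {n m : ℕ} (u v : Vtx n m) : (HH n m).dist u v = DD u v := by
  obtain ⟨p, hp⟩ := exists_walk_DD u v
  refine le_antisymm (hp ▸ SimpleGraph.dist_le p) ?_
  obtain ⟨q, hq⟩ := SimpleGraph.Reachable.exists_walk_length_eq_dist ⟨p⟩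
  exact hq ▸ DD_le_length q

/-- distance profile entry to pendant at column `a`, row 0. -/
def ee (τ c r a : ℕ) : ℕ :=
  if τ = 1 ∧ c = a ∧ r = 0 then 0 else (1 + τ) + r + (if c = a then 0 else 1)

/-- distance profile entry to pendant at column `n-2`, row `m-1`. -/
def eT (n m τ c r : ℕ) : ℕ :=
  if τ = 1 ∧ c = n - 2 ∧ r = m - 1 then 0
  else (1 + τ) + (m - 1 - r) + (if c = n - 2 then 0 else 1)

lemma ee_spec (τ c r a : ℕ) :
    (τ = 1 ∧ c = a ∧ r = 0 ∧ ee τ c r a = 0) ∨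
    (¬(τ = 1 ∧ c = a ∧ r = 0) ∧ c = a ∧ ee τ c r a = 1 + τ + r) ∨
    (c ≠ a ∧ ee τ c r a = 2 + τ + r) := by
  unfold ee
  split_ifs <;> omega

lemma eT_spec (n m τ c r : ℕ) :
    (τ = 1 ∧ c = n - 2 ∧ r = m - 1 ∧ eT n m τ c r = 0) ∨
    (¬(τ = 1 ∧ c = n - 2 ∧ r = m - 1) ∧ c = n - 2 ∧ eT n m τ c r = 1 + τ + (m - 1 - r)) ∨
    (c ≠ n - 2 ∧ eT n m τ c r = 2 + τ + (m - 1 - r)) := by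
  unfold eT
  split_ifs <;> omega

lemma master {n m τ c r τ' c' r' : ℕ} (hn : 4 ≤ n) (hm : 2 ≤ m)
    (hτ : τ ≤ 1) (hτ' : τ' ≤ 1) (hc : c < n) (hc' : c' < n) (hr : r < m) (hr' : r' < m)
    (H0 : ∀ a, a < n - 2 → ee τ c r a = ee τ' c' r' a)
    (HT : eT n m τ c r = eT n m τ' c' r') : τ = τ' ∧ c = c' ∧ r = r' := by
  by_cases z1 : τ = 1 ∧ r = 0 ∧ c < n - 2
  · have h := H0 c z1.2.2
    have s := ee_spec τ c r c
    have s' := ee_spec τ' c' r' c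
    omega
  by_cases z2 : τ' = 1 ∧ r' = 0 ∧ c' < n - 2
  · have h := H0 c' z2.2.2
    have s := ee_spec τ c r c'
    have s' := ee_spec τ' c' r' c'
    omega
  by_cases z3 : τ = 1 ∧ c = n - 2 ∧ r = m - 1
  · have t := eT_spec n m τ c r
    have t' := eT_spec n m τ' c' r'
    omega
  by_cases z4 : τ' = 1 ∧ c' = n - 2 ∧ r' = m - 1
  · have t := eT_spec n m τ c r
    have t' := eT_spec n m τ' c' r'
    omega
  by_cases hcB : c < n - 2
  · have h2 := H0 c hcB
    have e2 : ee τ c r c = 1 + τ + r := by have := ee_spec τ c r c; omega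
    by_cases hcB' : c' < n - 2
    · by_cases hcc : c = c'
      · subst hcc
        have e2' : ee τ' c r' c = 1 + τ' + r' := by have := ee_spec τ' c r' c; omega
        have f1 : eT n m τ c r = 2 + τ + (m - 1 - r) := by
          have := eT_spec n m τ c r; omega
        have f2 : eT n m τ' c r' = 2 + τ' + (m - 1 - r') := by
          have := eT_spec n m τ' c r'; omega
        omega
      · have e2' : ee τ' c' r' c = 2 + τ' + r' := by have := ee_spec τ' c' r' c; omega
        have h3 := H0 c' hcB'
        have e3 : ee τ c r c' = 2 + τ + r := by have := ee_spec τ c r c'; omega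
        have e3' : ee τ' c' r' c' = 1 + τ' + r' := by have := ee_spec τ' c' r' c'; omega
        omega
    · have e2' : ee τ' c' r' c = 2 + τ' + r' := by have := ee_spec τ' c' r' c; omega
      have h4 := H0 (1 - min c 1) (by omega)
      have e4 : ee τ c r (1 - min c 1) = 2 + τ + r := by
        have := ee_spec τ c r (1 - min c 1); omega
      have e4' : ee τ' c' r' (1 - min c 1) = 2 + τ' + r' := by
        have := ee_spec τ' c' r' (1 - min c 1); omega
      omega
  · by_cases hcB' : c' < n - 2
    · have h3 := H0 c' hcB'
      have e3 : ee τ c r c' = 2 + τ + r := by have := ee_spec τ c r c'; omega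
      have e3' : ee τ' c' r' c' = 1 + τ' + r' := by have := ee_spec τ' c' r' c'; omega
      have h4 := H0 (1 - min c' 1) (by omega)
      have e4 : ee τ c r (1 - min c' 1) = 2 + τ + r := by
        have := ee_spec τ c r (1 - min c' 1); omega
      have e4' : ee τ' c' r' (1 - min c' 1) = 2 + τ' + r' := by
        have := ee_spec τ' c' r' (1 - min c' 1); omega
      omega
    · have h0 := H0 0 (by omega)
      have e0 : ee τ c r 0 = 2 + τ + r := by have := ee_spec τ c r 0; omega
      have e0' : ee τ' c' r' 0 = 2 + τ' + r' := by have := ee_spec τ' c' r' 0; omega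
      have t := eT_spec n m τ c r
      have t' := eT_spec n m τ' c' r'
      omega

def tauV {n m : ℕ} : Vtx n m → ℕ := Sum.elim (fun _ => 0) (fun _ => 1)
def colV {n m : ℕ} : Vtx n m → ℕ := Sum.elim (fun x => (x.1 : ℕ)) (fun x => (x.1 : ℕ))
def rowV {n m : ℕ} : Vtx n m → ℕ := Sum.elim (fun x => (x.2 : ℕ)) (fun x => (x.2 : ℕ))

lemma DD_pend0 {n m : ℕ} (u : Vtx n m) (a : Fin n) (z : Fin m) (hz : (z : ℕ) = 0) :
    DD u (.inr (a, z)) = ee (tauV u) (colV u) (rowV u) (a : ℕ) := by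
  rcases u with ⟨c, r⟩ | ⟨c, r⟩ <;>
    simp only [DD, ee, tauV, colV, rowV, Sum.elim_inl, Sum.elim_inr, Nat.dist, Fin.ext_iff, hz] <;>
    split_ifs <;> first | omega | tauto | (simp_all <;> omega)

lemma DD_pendT {n m : ℕ} (u : Vtx n m) (a : Fin n) (z : Fin m)
    (ha : (a : ℕ) = n - 2) (hz : (z : ℕ) = m - 1) :
    DD u (.inr (a, z)) = eT n m (tauV u) (colV u) (rowV u) := by
  rcases u with ⟨c, r⟩ | ⟨c, r⟩ <;>
    have hr := r.2 <;>
    simp only [DD, eT, tauV, colV, rowV, Sum.elim_inl, Sum.elim_inr, Nat.dist, Fin.ext_iff,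
      hz, ha] <;>
    split_ifs <;> first | omega | tauto | (simp_all <;> omega)

lemma exists_resolving {n m : ℕ} (hn : 4 ≤ n) (hm : 2 ≤ m) :
    ∃ S : Finset (Vtx n m), S.card = n - 1 ∧ IsResolving (HH n m) (↑S : Set (Vtx n m)) := by
  obtain ⟨f, hf⟩ : ∃ f : Fin n → Vtx n m, f = fun a : Fin n =>
      if (a : ℕ) = n - 2 then Sum.inr (a, (⟨m - 1, by omega⟩ : Fin m))
      else Sum.inr (a, (⟨0, by omega⟩ : Fin m)) := ⟨_, rfl⟩
  have hinj : Function.Injective f := by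
    intro x y hxy
    rw [hf] at hxy
    simp only at hxy
    split_ifs at hxy <;> (simp only [Sum.inr.injEq, Prod.mk.injEq] at hxy; exact hxy.1)
  refine ⟨(Finset.univ.erase (⟨n - 1, by omega⟩ : Fin n)).image f, ?_, ?_⟩
  · rw [Finset.card_image_of_injective _ hinj, Finset.card_erase_of_mem (Finset.mem_univ _),
      Finset.card_univ, Fintype.card_fin]
  · intro u v hyp
    have key : ∀ a : Fin n, (a : ℕ) ≠ n - 1 → (HH n m).dist u (f a) = (HH n m).dist v (f a) := by
      intro a ha
      apply hyp
      simp only [Finset.coe_image, Set.mem_image, Finset.mem_coe, Finset.mem_erase]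
      refine ⟨a, ⟨fun h => ha ?_, Finset.mem_univ _⟩, rfl⟩
      rw [h]
    have H0 : ∀ a, a < n - 2 →
        ee (tauV u) (colV u) (rowV u) a = ee (tauV v) (colV v) (rowV v) a := by
      intro a ha
      have h := key ⟨a, by omega⟩ (by simp; omega)
      rw [hf] at h
      simp only [if_neg (show ((⟨a, by omega⟩ : Fin n) : ℕ) ≠ n - 2 by simp; omega)] at h
      rw [dist_eq_DD, dist_eq_DD, DD_pend0 u _ _ rfl, DD_pend0 v _ _ rfl] at h
      exact h
    have HT : eT n m (tauV u) (colV u) (rowV u) = eT n m (tauV v) (colV v) (rowV v) := by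
      have h := key ⟨n - 2, by omega⟩ (by simp; omega)
      rw [hf] at h
      simp only [if_pos (show ((⟨n - 2, by omega⟩ : Fin n) : ℕ) = n - 2 from rfl), if_true, ite_true] at h
      rw [dist_eq_DD, dist_eq_DD, DD_pendT u _ _ rfl rfl, DD_pendT v _ _ rfl rfl] at h
      exact h
    have hbounds : tauV u ≤ 1 ∧ tauV v ≤ 1 ∧ colV u < n ∧ colV v < n ∧ rowV u < m ∧
        rowV v < m := by
      rcases u with ⟨c, r⟩ | ⟨c, r⟩ <;> rcases v with ⟨c', r'⟩ | ⟨c', r'⟩ <;>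
        exact ⟨by simp [tauV], by simp [tauV], by simp [colV], by simp [colV],
          by simp [rowV], by simp [rowV]⟩
    obtain ⟨e1, e2, e3⟩ := master hn hm hbounds.1 hbounds.2.1 hbounds.2.2.1 hbounds.2.2.2.1
      hbounds.2.2.2.2.1 hbounds.2.2.2.2.2 H0 HT
    rcases u with ⟨c, r⟩ | ⟨c, r⟩ <;> rcases v with ⟨c', r'⟩ | ⟨c', r'⟩ <;>
      simp only [tauV, colV, rowV, Sum.elim_inl, Sum.elim_inr] at e1 e2 e3 <;>
      first
        | omega
        | (simp only [Sum.inl.injEq, Sum.inr.injEq, Prod.mk.injEq, Fin.ext_iff]; exact ⟨e2, e3⟩)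

lemma lower_bound {n m : ℕ} (hn : 4 ≤ n) (hm : 2 ≤ m) (S : Finset (Vtx n m))
    (hres : IsResolving (HH n m) (↑S : Set (Vtx n m))) : n - 1 ≤ S.card := by
  have hm0 : 0 < m := by omega
  obtain ⟨colF, hcolF⟩ : ∃ g : Vtx n m → Fin n,
      g = Sum.elim (fun x => x.1) (fun x => x.1) := ⟨_, rfl⟩
  set C := S.image colF with hC
  have hmiss : ∀ a b : Fin n, a ∉ C → b ∉ C → a = b := by
    intro a b haC hbC
    by_contra hab
    have heq := hres (.inr (a, ⟨0, hm0⟩)) (.inr (b, ⟨0, hm0⟩)) ?_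
    · simp only [Sum.inr.injEq, Prod.mk.injEq] at heq
      exact hab heq.1
    · intro s hs
      have ha' : a ≠ colF s := fun h => haC (Finset.mem_image.2 ⟨s, hs, h.symm⟩)
      have hb' : b ≠ colF s := fun h => hbC (Finset.mem_image.2 ⟨s, hs, h.symm⟩)
      rw [dist_eq_DD, dist_eq_DD]
      rcases s with ⟨c, i⟩ | ⟨c, i⟩ <;>
        rw [hcolF] at ha' hb' <;>
        simp only [Sum.elim_inl, Sum.elim_inr] at ha' hb'
      · simp only [DD, if_neg ha', if_neg hb']
      · simp only [DD, if_neg ha', if_neg hb',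
          if_neg (show ¬(a = c ∧ (⟨0, hm0⟩ : Fin m) = i) from fun h => ha' h.1),
          if_neg (show ¬(b = c ∧ (⟨0, hm0⟩ : Fin m) = i) from fun h => hb' h.1)]
  have hcompl : (Finset.univ \ C).card ≤ 1 := by
    apply Finset.card_le_one.2
    intro x hx y hy
    rw [Finset.mem_sdiff] at hx hy
    exact hmiss x y hx.2 hy.2
  have h1 : (Finset.univ \ C).card = n - C.card := by
    rw [Finset.card_sdiff_of_subset (Finset.subset_univ C), Finset.card_univ, Fintype.card_fin]
  have h2 : C.card ≤ S.card := Finset.card_image_le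
  have h3 : C.card ≤ n := by
    have := Finset.card_le_card (Finset.subset_univ C)
    rwa [Finset.card_univ, Fintype.card_fin] at this
  omega

theorem stmt_6 (n m : ℕ) (hn : 4 ≤ n) (hm : 2 ≤ m) :
    metricDim (corona ((⊤ : SimpleGraph (Fin n)) □ pathGraph m)) = n - 1 := by
  obtain ⟨S, hcard, hres⟩ := exists_resolving (n := n) (m := m) hn hm
  have hmem : (n - 1) ∈ {k | ∃ T : Finset (Vtx n m), T.card = k ∧
      IsResolving (HH n m) (↑T : Set (Vtx n m))} := ⟨S, hcard, hres⟩
  refine le_antisymm (Nat.sInf_le hmem) (le_csInf ⟨n - 1, hmem⟩ ?_)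
  rintro k ⟨T, rfl, hT⟩
  exact lower_bound hn hm T hT
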